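/- arXiv:1903.12333 — 2 statements merged into one kernel-verified Lean document; each statement's English description precedes it below -/
import Mathlib

section
/- Let 𝒜 have size q ≥ 2 and let f : 𝒜^n → {−1, 0, 1}. Then f is a λ₁(n,q)-eigenfunction of H(n,q) if and only if f is the all-zero function, or f is an (A,B,i)-quasi string with |A| = |B| for some i ∈ {1,…,n} and disjoint A, B ⊆ 𝒜 with A ∪ B ≠ ∅, or f is an (A,B,i,j)-quasi cross with |A| = |B| for some distinct i, j ∈ {1,…,n} and nonempty A, B ⊆ 𝒜. -/
/-- `f` is a `lam`-eigenfunction of `G`: for every vertex `x` the sum of `f` over the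
neighbors of `x` equals `lam * f x` (the all-zero function is allowed). -/
def IsEigenfun {V : Type*} (G : SimpleGraph V) [Fintype V] (lam : ℝ) (f : V → ℝ) : Prop :=
  ∀ x : V, ∑ y : V, (G.neighborSet x).indicator f y = lam * f x

/-- The Hamming graph `H(n,q)` on the vertex set `𝒜ⁿ` (where `|𝒜| = q`): two vertices are
adjacent iff they differ in exactly one coordinate. -/
def hammingGraph (n : ℕ) (𝒜 : Type*) [DecidableEq 𝒜] : SimpleGraph (Fin n → 𝒜) where
  Adj x y := hammingDist x y = 1
  symm := ⟨fun x y h => by simpa [hammingDist_comm] using h⟩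
  loopless := ⟨fun x h => by simp [hammingDist_self] at h⟩

open scoped Classical in
/-- The `(A,B,i)`-quasi string: value `1` if `x i ∈ A`, value `-1` if `x i ∈ B`,
and `0` otherwise. -/
noncomputable def quasiString {n : ℕ} {𝒜 : Type*} (A B : Set 𝒜) (i : Fin n) :
    (Fin n → 𝒜) → ℝ :=
  fun x => if x i ∈ A then 1 else if x i ∈ B then -1 else 0

open scoped Classical in
/-- The `(A,B,i,j)`-quasi cross: value `1` if `x i ∈ A` and `x j ∉ B`, value `-1` if
`x i ∉ A` and `x j ∈ B`, and `0` otherwise. -/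
noncomputable def quasiCross {n : ℕ} {𝒜 : Type*} (A B : Set 𝒜) (i j : Fin n) :
    (Fin n → 𝒜) → ℝ :=
  fun x => if x i ∈ A ∧ x j ∉ B then 1 else if x i ∉ A ∧ x j ∈ B then -1 else 0


section Stmt12AuxSection

namespace Stmt12Aux

variable {𝒜 : Type*} [Fintype 𝒜] [DecidableEq 𝒜] {n : ℕ}


lemma ncard_filter (C : Set 𝒜) [DecidablePred (· ∈ C)] :
    ((Finset.univ.filter (fun a => a ∈ C)).card : ℕ) = C.ncard := by
  classical
  rw [Set.ncard_eq_toFinset_card']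
  congr 1
  ext a
  simp

/-- Sum of `f` over all vertices obtained by replacing coordinate `i`. -/
noncomputable def T (i : Fin n) (f : (Fin n → 𝒜) → ℝ) (x : Fin n → 𝒜) : ℝ :=
  ∑ a : 𝒜, f (Function.update x i a)

lemma T_update_self (i : Fin n) (f : (Fin n → 𝒜) → ℝ) (x : Fin n → 𝒜) (b : 𝒜) :
    T i f (Function.update x i b) = T i f x := by
  simp [T, Function.update_idem]

lemma T_comm {i j : Fin n} (h : i ≠ j) (f : (Fin n → 𝒜) → ℝ) (x : Fin n → 𝒜) :
    T i (T j f) x = T j (T i f) x := by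
  simp only [T]
  rw [Finset.sum_comm]
  refine Finset.sum_congr rfl fun b _ => Finset.sum_congr rfl fun a _ => ?_
  rw [Function.update_comm h]

lemma hammingDist_update {x : Fin n → 𝒜} {i : Fin n} {a : 𝒜} (h : a ≠ x i) :
    hammingDist x (Function.update x i a) = 1 := by
  unfold hammingDist
  rw [show (Finset.univ.filter fun j => x j ≠ Function.update x i a j) = {i} from ?_]
  · simp
  · ext j
    simp only [Finset.mem_filter, Finset.mem_univ, true_and, Finset.mem_singleton,
      Function.update_apply]
    by_cases hj : j = i <;> simp [hj, Ne.symm h]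

lemma sum_neighbors (f : (Fin n → 𝒜) → ℝ) (x : Fin n → 𝒜) :
    ∑ y : Fin n → 𝒜, ((hammingGraph n 𝒜).neighborSet x).indicator f y
      = ∑ i : Fin n, (T i f x - f x) := by
  classical
  have h1 : ∑ y : Fin n → 𝒜, ((hammingGraph n 𝒜).neighborSet x).indicator f y
      = ∑ y ∈ Finset.univ.filter (fun y => hammingDist x y = 1), f y := by
    rw [Finset.sum_filter]
    refine Finset.sum_congr rfl fun y _ => ?_
    rw [Set.indicator_apply]
    congr 1
  rw [h1]
  have h2 : ∑ i : Fin n, (T i f x - f x)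
      = ∑ p ∈ (Finset.univ : Finset (Fin n)).sigma (fun i => Finset.univ.erase (x i)),
          f (Function.update x p.1 p.2) := by
    rw [Finset.sum_sigma]
    refine Finset.sum_congr rfl fun i _ => ?_
    have : T i f x = f (Function.update x i (x i)) + ∑ a ∈ Finset.univ.erase (x i),
        f (Function.update x i a) := by
      rw [T, ← Finset.add_sum_erase _ _ (Finset.mem_univ (x i))]
    rw [this, Function.update_eq_self]
    ring
  rw [h2]
  refine (Finset.sum_bij (fun p _ => Function.update x p.1 p.2) ?_ ?_ ?_ ?_).symm
  · rintro ⟨i, a⟩ hp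
    simp only [Finset.mem_sigma, Finset.mem_univ, Finset.mem_erase, true_and] at hp
    simp only [Finset.mem_filter, Finset.mem_univ, true_and]
    exact hammingDist_update hp.1
  · rintro ⟨i, a⟩ hp ⟨j, b⟩ hq heq
    simp only [Finset.mem_sigma, Finset.mem_univ, Finset.mem_erase, true_and] at hp hq
    dsimp only at heq
    have hij : i = j := by
      by_contra hij
      have := congrFun heq i
      rw [Function.update_self] at this
      rw [Function.update_of_ne hij] at this
      exact hp.1 this
    subst hij
    have := congrFun heq i
    rw [Function.update_self, Function.update_self] at this
    simp [this]
  · intro y hy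
    simp only [Finset.mem_filter, Finset.mem_univ, true_and] at hy
    unfold hammingDist at hy
    obtain ⟨i, hi⟩ := Finset.card_eq_one.mp hy
    have hmem : ∀ j, (x j ≠ y j) ↔ j = i := by
      intro j
      constructor
      · intro hj
        have hjm : j ∈ Finset.univ.filter fun k => x k ≠ y k := by simp [hj]
        rw [hi] at hjm; simpa using hjm
      · rintro rfl
        have hjm : j ∈ Finset.univ.filter fun k => x k ≠ y k := by
          rw [hi]; simp
        simpa using hjm
    refine ⟨⟨i, y i⟩, ?_, ?_⟩
    · simp only [Finset.mem_sigma, Finset.mem_univ, Finset.mem_erase, true_and]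
      refine ⟨Ne.symm ((hmem i).mpr rfl), trivial⟩
    · dsimp only
      funext j
      by_cases hj : j = i
      · subst hj; simp
      · rw [Function.update_of_ne hj]
        by_contra hne
        exact hj ((hmem j).mp (fun h => hne h))
  · rintro ⟨i, a⟩ hp; rfl


/-- If `f` doesn't depend on coordinates outside `S`, it's determined by coords in `S`. -/
lemma dep_eq (S : Finset (Fin n)) (f : (Fin n → 𝒜) → ℝ)
    (hdep : ∀ i ∉ S, ∀ x a, f (Function.update x i a) = f x)
    (x y : Fin n → 𝒜) (hxy : ∀ i ∈ S, x i = y i) : f x = f y := by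
  classical
  have key : ∀ (D : Finset (Fin n)), Disjoint D S → ∀ x y : Fin n → 𝒜,
      (∀ i ∉ D, x i = y i) → f x = f y := by
    intro D
    induction D using Finset.induction_on with
    | empty =>
      intro _ x y h
      have : x = y := funext fun i => h i (Finset.notMem_empty i)
      rw [this]
    | @insert k D hkD ih =>
      intro hdisj x y h
      have hkS : k ∉ S := fun hkS =>
        (Finset.disjoint_left.mp hdisj (Finset.mem_insert_self k D)) hkS
      have h1 : f (Function.update x k (y k)) = f x := hdep k hkS x (y k)
      rw [← h1]
      refine ih (Finset.disjoint_of_subset_left (Finset.subset_insert k D) hdisj)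
        _ _ fun i hi => ?_
      by_cases hik : i = k
      · subst hik; simp
      · rw [Function.update_of_ne hik]
        exact h i (fun hins => (Finset.mem_insert.mp hins).elim hik hi)
  refine key (Finset.univ \ S) (Finset.sdiff_disjoint) x y fun i hi => ?_
  refine hxy i ?_
  by_contra hiS
  exact hi (Finset.mem_sdiff.mpr ⟨Finset.mem_univ i, hiS⟩)

/-- Structure of local eigenfunctions: induction on the support set. -/
lemma structure_lemma [Nonempty 𝒜] :
    ∀ (m : ℕ) (S : Finset (Fin n)) (f : (Fin n → 𝒜) → ℝ), S.card = m →
    (∀ i ∉ S, ∀ x a, f (Function.update x i a) = f x) →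
    (∀ x, ∑ i ∈ S, T i f x
        = ((Fintype.card 𝒜 : ℝ) * S.card - Fintype.card 𝒜) * f x) →
    ∃ φ : Fin n → 𝒜 → ℝ, (∀ i, ∑ a, φ i a = 0) ∧ ∀ x, f x = ∑ i, φ i (x i) := by
  intro m
  induction m using Nat.strong_induction_on with
  | _ m IH =>
  intro S f hcard hdep heig
  have hq0 : (0 : ℝ) < (Fintype.card 𝒜 : ℝ) := by exact_mod_cast Fintype.card_pos
  match m, hcard with
  | 0, hcard =>
    have hS : S = ∅ := Finset.card_eq_zero.mp hcard
    subst hS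
    have hf0 : ∀ x, f x = 0 := by
      intro x
      have h := heig x
      rw [Finset.sum_empty] at h
      simp only [Finset.card_empty, Nat.cast_zero, mul_zero, zero_sub] at h
      have h2 : (Fintype.card 𝒜 : ℝ) * f x = 0 := by linarith
      exact (mul_eq_zero.mp h2).resolve_left hq0.ne'
    exact ⟨0, by simp, fun x => by simp [hf0 x]⟩
  | 1, hcard =>
    obtain ⟨i, hS⟩ := Finset.card_eq_one.mp hcard
    subst hS
    obtain ⟨z⟩ : Nonempty (Fin n → 𝒜) := inferInstance
    have hT0 : ∀ x, T i f x = 0 := by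
      intro x
      have h := heig x
      simpa using h
    refine ⟨fun j => if j = i then (fun a => f (Function.update z i a)) else 0, ?_, ?_⟩
    · intro j
      by_cases hj : j = i
      · subst hj
        simpa [T] using hT0 z
      · simp [hj]
    · intro x
      have h1 : ∑ j : Fin n, (if j = i then (fun a => f (Function.update z i a)) else 0) (x j)
          = f (Function.update z i (x i)) := by
        rw [Finset.sum_eq_single i]
        · simp
        · intro j _ hj; simp [hj]
        · intro h; exact absurd (Finset.mem_univ i) h
      rw [h1]
      refine dep_eq {i} f (fun j hj x a => hdep j hj x a) x _ fun j hj => ?_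
      rw [Finset.mem_singleton] at hj
      subst hj
      simp
  | (mm + 2), hcard =>
    set q : ℝ := (Fintype.card 𝒜 : ℝ) with hqdef
    have hkey : ∀ k, ∃ ψ : Fin n → 𝒜 → ℝ, (∀ i, ∑ a, ψ i a = 0) ∧
        (k ∈ S → ∀ x, T k f x = ∑ i, ψ i (x i)) := by
      intro k
      by_cases hk : k ∈ S
      · set g : (Fin n → 𝒜) → ℝ := T k f with hg
        have hdep_g : ∀ i ∉ S.erase k, ∀ x a, g (Function.update x i a) = g x := by
          intro i hi x a
          rw [Finset.mem_erase] at hi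
          push_neg at hi
          by_cases hik : i = k
          · subst hik; exact T_update_self _ _ _ _
          · have hiS : i ∉ S := hi hik
            show T k f _ = T k f _
            simp only [T]
            refine Finset.sum_congr rfl fun b _ => ?_
            rw [Function.update_comm (fun h => hik h) a b x]
            exact hdep i hiS _ a
        have hcard_e : (S.erase k).card = mm + 1 := by
          rw [Finset.card_erase_of_mem hk, hcard]
          omega
        have heig_g : ∀ x, ∑ i ∈ S.erase k, T i g x
            = (q * (S.erase k).card - q) * g x := by
          intro x
          have hgx : g x = ∑ a : 𝒜, f (Function.update x k a) := rfl
          have hA : ∑ i ∈ S, ∑ a : 𝒜, T i f (Function.update x k a)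
              = (q * S.card - q) * g x := by
            rw [Finset.sum_comm]
            rw [Finset.sum_congr rfl (fun a (_ : a ∈ Finset.univ) =>
              heig (Function.update x k a))]
            rw [← Finset.mul_sum, hgx]
          have hsplit : (∑ a : 𝒜, T k f (Function.update x k a))
              + ∑ i ∈ S.erase k, ∑ a : 𝒜, T i f (Function.update x k a)
              = ∑ i ∈ S, ∑ a : 𝒜, T i f (Function.update x k a) :=
            Finset.add_sum_erase S (fun i => ∑ a : 𝒜, T i f (Function.update x k a)) hk
          have hkterm : (∑ a : 𝒜, T k f (Function.update x k a)) = q * g x := by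
            rw [Finset.sum_congr rfl (fun a (_ : a ∈ Finset.univ) => T_update_self k f x a)]
            rw [Finset.sum_const, Finset.card_univ, nsmul_eq_mul]
          have herase : ∀ i ∈ S.erase k,
              (∑ a : 𝒜, T i f (Function.update x k a)) = T i g x := by
            intro i hi
            have hik : i ≠ k := (Finset.mem_erase.mp hi).1
            show T k (T i f) x = T i (T k f) x
            exact T_comm (Ne.symm hik) f x
          rw [hkterm, Finset.sum_congr rfl herase] at hsplit
          rw [hA] at hsplit
          rw [hcard_e]
          rw [hcard] at hsplit
          push_cast at hsplit ⊢
          linear_combination hsplit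
        obtain ⟨ψ, hψ0, hψ1⟩ := IH (mm + 1) (by omega) (S.erase k) g hcard_e hdep_g heig_g
        exact ⟨ψ, hψ0, fun _ => hψ1⟩
      · exact ⟨0, by simp, fun h => absurd h hk⟩
    choose ψ hψ0 hψ1 using hkey
    set c : ℝ := q * S.card - q with hcdef
    have hc0 : c ≠ 0 := by
      have h2 : (2 : ℝ) ≤ (S.card : ℝ) := by rw [hcard]; push_cast; linarith
      have hq1 : (1 : ℝ) ≤ q := by
        rw [hqdef]; exact_mod_cast Fintype.card_pos
      rw [hcdef]; nlinarith
    refine ⟨fun i a => c⁻¹ * ∑ k ∈ S, ψ k i a, ?_, ?_⟩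
    · intro i
      rw [← Finset.mul_sum, Finset.sum_comm]
      simp [hψ0]
    · intro x
      have h1 : f x = c⁻¹ * ∑ k ∈ S, T k f x := by
        rw [heig x]
        exact (inv_mul_cancel_left₀ hc0 (f x)).symm
      rw [h1]
      rw [Finset.sum_congr rfl (fun k hk => hψ1 k hk x)]
      rw [Finset.sum_comm, Finset.mul_sum]


lemma eigen_iff (q : ℕ) (hq : Fintype.card 𝒜 = q) (f : (Fin n → 𝒜) → ℝ) :
    IsEigenfun (hammingGraph n 𝒜) (((q : ℝ) - 1) * n - q) f ↔
    ∀ x, ∑ i : Fin n, T i f x = ((q : ℝ) * n - q) * f x := by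
  unfold IsEigenfun
  refine forall_congr' fun x => ?_
  rw [sum_neighbors, Finset.sum_sub_distrib, Finset.sum_const, Finset.card_univ,
    Fintype.card_fin, nsmul_eq_mul]
  constructor <;> intro h <;> linear_combination h

lemma sum_update (φ : Fin n → 𝒜 → ℝ) (x : Fin n → 𝒜) (i : Fin n) (a : 𝒜) :
    ∑ j : Fin n, φ j (Function.update x i a j)
      = φ i a + (∑ j : Fin n, φ j (x j)) - φ i (x i) := by
  have h1 : ∑ j : Fin n, φ j (Function.update x i a j)
      = φ i a + ∑ j ∈ Finset.univ.erase i, φ j (x j) := by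
    rw [← Finset.add_sum_erase _ (fun j => φ j (Function.update x i a j)) (Finset.mem_univ i)]
    congr 1
    · rw [Function.update_self]
    · exact Finset.sum_congr rfl fun j hj =>
        congrArg (φ j) (Function.update_of_ne (Finset.mem_erase.mp hj).1 a x)
  have h2 : ∑ j : Fin n, φ j (x j) = φ i (x i) + ∑ j ∈ Finset.univ.erase i, φ j (x j) :=
    (Finset.add_sum_erase _ (fun j => φ j (x j)) (Finset.mem_univ i)).symm
  rw [h1, h2]; ring

lemma decomp_eigen (φ : Fin n → 𝒜 → ℝ) (hsum : ∀ i, ∑ a, φ i a = 0)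
    (f : (Fin n → 𝒜) → ℝ) (hf : ∀ x, f x = ∑ j, φ j (x j)) (x : Fin n → 𝒜) :
    ∑ i : Fin n, T i f x
      = ((Fintype.card 𝒜 : ℝ) * n - Fintype.card 𝒜) * f x := by
  have hT : ∀ i, T i f x = (Fintype.card 𝒜 : ℝ) * (f x - φ i (x i)) := by
    intro i
    unfold T
    have : ∀ a : 𝒜, f (Function.update x i a)
        = φ i a + f x - φ i (x i) := by
      intro a
      rw [hf (Function.update x i a), sum_update, ← hf x]
    rw [Finset.sum_congr rfl fun a _ => this a]
    rw [Finset.sum_sub_distrib, Finset.sum_add_distrib, hsum i, Finset.sum_const,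
      Finset.sum_const, Finset.card_univ, nsmul_eq_mul, nsmul_eq_mul]
    ring
  rw [Finset.sum_congr rfl fun i (_ : i ∈ Finset.univ) => hT i]
  rw [← Finset.mul_sum, Finset.sum_sub_distrib, Finset.sum_const, Finset.card_univ,
    Fintype.card_fin, nsmul_eq_mul, ← hf x]
  ring


lemma classify (hq2 : 2 ≤ Fintype.card 𝒜) (φ : Fin n → 𝒜 → ℝ)
    (hsum : ∀ i, ∑ a, φ i a = 0)
    (f : (Fin n → 𝒜) → ℝ) (hf : ∀ x, f x = ∑ i, φ i (x i))
    (hval : ∀ x, f x ∈ ({-1, 0, 1} : Set ℝ)) :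
    (∀ x, f x = 0) ∨
      (∃ (i : Fin n) (A B : Set 𝒜), Disjoint A B ∧ (A ∪ B).Nonempty ∧
        A.ncard = B.ncard ∧ f = quasiString A B i) ∨
      (∃ (i j : Fin n), i ≠ j ∧ ∃ A B : Set 𝒜, A.Nonempty ∧ B.Nonempty ∧
        A.ncard = B.ncard ∧ f = quasiCross A B i j) := by
  classical
  have hcard0 : (0 : ℝ) < (Fintype.card 𝒜 : ℝ) := by
    have : (0 : ℕ) < Fintype.card 𝒜 := by omega
    exact_mod_cast this
  have hne : Nonempty 𝒜 := Fintype.card_pos_iff.mp (by omega)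
  -- maxima and minima of each φ i
  have hmaxex : ∀ i : Fin n, ∃ b, ∀ a, φ i a ≤ φ i b := fun i => Finite.exists_max (φ i)
  have hminex : ∀ i : Fin n, ∃ b, ∀ a, φ i b ≤ φ i a := fun i => Finite.exists_min (φ i)
  choose amax hamax using hmaxex
  choose amin hamin using hminex
  set m : Fin n → ℝ := fun i => φ i (amax i) with hm
  set u : Fin n → ℝ := fun i => φ i (amin i) with hu
  have hm0 : ∀ i, 0 ≤ m i := by
    intro i
    by_contra hneg
    push_neg at hneg
    have hlt : ∑ a : 𝒜, φ i a < 0 := by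
      have hle : ∀ a ∈ Finset.univ, φ i a ≤ m i := fun a _ => hamax i a
      calc ∑ a : 𝒜, φ i a ≤ ∑ _a : 𝒜, m i := Finset.sum_le_sum hle
        _ = (Fintype.card 𝒜 : ℝ) * m i := by
            rw [Finset.sum_const, Finset.card_univ, nsmul_eq_mul]
        _ < 0 := mul_neg_of_pos_of_neg hcard0 hneg
    rw [hsum i] at hlt; exact lt_irrefl _ hlt
  have hu0 : ∀ i, u i ≤ 0 := by
    intro i
    by_contra hneg
    push_neg at hneg
    have hlt : 0 < ∑ a : 𝒜, φ i a := by
      have hle : ∀ a ∈ Finset.univ, u i ≤ φ i a := fun a _ => hamin i a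
      calc (0:ℝ) < (Fintype.card 𝒜 : ℝ) * u i := mul_pos hcard0 hneg
        _ = ∑ _a : 𝒜, u i := by rw [Finset.sum_const, Finset.card_univ, nsmul_eq_mul]
        _ ≤ ∑ a : 𝒜, φ i a := Finset.sum_le_sum hle
    rw [hsum i] at hlt; exact lt_irrefl _ hlt
  have hmu : ∀ i, u i ≤ m i := fun i => hamin i (amax i)
  -- if max is 0 then φ i vanishes
  have hzero : ∀ i, m i = 0 → ∀ a, φ i a = 0 := by
    intro i him a
    have hnn : ∀ b ∈ Finset.univ, (0:ℝ) ≤ -φ i b := by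
      intro b _
      have h2 : φ i b ≤ m i := hamax i b
      rw [him] at h2
      linarith
    have hs : ∑ b : 𝒜, -φ i b = 0 := by
      rw [Finset.sum_neg_distrib, hsum i, neg_zero]
    have := (Finset.sum_eq_zero_iff_of_nonneg hnn).mp hs a (Finset.mem_univ a)
    linarith
  have hzero' : ∀ i, u i = 0 → ∀ a, φ i a = 0 := by
    intro i hiu a
    have hnn : ∀ b ∈ Finset.univ, (0:ℝ) ≤ φ i b := by
      intro b _
      have h2 : u i ≤ φ i b := hamin i b
      rw [hiu] at h2
      linarith
    exact (Finset.sum_eq_zero_iff_of_nonneg hnn).mp (hsum i) a (Finset.mem_univ a)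
  -- the max-value and min-value of f
  have hval' : ∀ x, f x = -1 ∨ f x = 0 ∨ f x = 1 := by
    intro x
    have := hval x
    simpa [Set.mem_insert_iff] using this
  have hfmax : f amax = ∑ i, m i := hf amax
  have hfmin : f amin = ∑ i, u i := hf amin
  have hM0 : 0 ≤ ∑ i, m i := Finset.sum_nonneg fun i _ => hm0 i
  have hU0 : ∑ i, u i ≤ 0 := Finset.sum_nonpos fun i _ => hu0 i
  have hMval : f amax = 0 ∨ f amax = 1 := by
    rcases hval' amax with h | h | h
    · exfalso; rw [hfmax] at h; linarith
    · exact Or.inl h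
    · exact Or.inr h
  rcases hMval with hM | hM
  · -- all zero
    left
    have hmz : ∀ i ∈ Finset.univ, m i = 0 := by
      rw [hfmax] at hM
      exact fun i hi => (Finset.sum_eq_zero_iff_of_nonneg fun i _ => hm0 i).mp hM i hi
    have hφz : ∀ i a, φ i a = 0 := fun i a => hzero i (hmz i (Finset.mem_univ i)) a
    intro x
    rw [hf x]
    exact Finset.sum_eq_zero fun i _ => hφz i (x i)
  · -- f amax = 1
    have hMsum : ∑ i, m i = 1 := by rw [← hfmax, hM]
    have hUval : f amin = -1 := by
      rcases hval' amin with h | h | h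
      · exact h
      · exfalso
        rw [hfmin] at h
        have huz : ∀ i ∈ Finset.univ, -u i = 0 := by
          refine (Finset.sum_eq_zero_iff_of_nonneg fun i _ => by
            have := hu0 i; linarith).mp ?_
          rw [Finset.sum_neg_distrib, h, neg_zero]
        have hφz : ∀ i a, φ i a = 0 := by
          intro i a
          exact hzero' i (by have := huz i (Finset.mem_univ i); linarith) a
        have : (1:ℝ) = 0 := by
          rw [← hMsum]
          exact Finset.sum_eq_zero fun i _ => hφz i (amax i)
        norm_num at this
      · exfalso; rw [hfmin] at h; linarith
    have hUsum : ∑ i, u i = -1 := by rw [← hfmin, hUval]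
    -- the gaps d i = m i - u i
    have hdsum : ∑ i, (m i - u i) = 2 := by
      rw [Finset.sum_sub_distrib, hMsum, hUsum]; norm_num
    have hdelta : ∀ i, m i - u i = 0 ∨ m i - u i = 1 ∨ m i - u i = 2 := by
      intro i
      have hx : f (Function.update amax i (amin i)) = 1 - (m i - u i) := by
        rw [hf, sum_update, ← hf amax, hM]
        simp only [hm, hu]
        ring
      rcases hval' (Function.update amax i (amin i)) with h | h | h <;> rw [hx] at h
      · right; right; linarith
      · right; left; linarith
      · left; linarith
    set N : Finset (Fin n) := Finset.univ.filter (fun i => m i - u i ≠ 0) with hN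
    have hoffN : ∀ i ∉ N, ∀ a, φ i a = 0 := by
      intro i hi a
      rw [hN, Finset.mem_filter] at hi
      push_neg at hi
      have hd0 : m i - u i = 0 := hi (Finset.mem_univ i)
      have : m i = 0 := le_antisymm (by have := hu0 i; linarith) (hm0 i)
      exact hzero i this a
    have hoffm : ∀ i ∉ N, m i = 0 := fun i hi => hoffN i hi (amax i)
    have hoffu : ∀ i ∉ N, u i = 0 := fun i hi => hoffN i hi (amin i)
    have hNdsum : ∑ i ∈ N, (m i - u i) = 2 := by
      rw [← hdsum]
      exact Finset.sum_filter_ne_zero Finset.univ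
    have hNm : ∑ i ∈ N, m i = 1 := by
      rw [← hMsum]
      exact Finset.sum_subset (Finset.subset_univ N) (fun i _ hi => hoffm i hi)
    have hNu : ∑ i ∈ N, u i = -1 := by
      rw [← hUsum]
      exact Finset.sum_subset (Finset.subset_univ N) (fun i _ hi => hoffu i hi)
    have hcardN : N.card ≤ 2 := by
      by_contra hc
      push_neg at hc
      have h1 : ∀ i ∈ N, (1:ℝ) ≤ m i - u i := by
        intro i hi
        rw [hN, Finset.mem_filter] at hi
        rcases hdelta i with h | h | h
        · exact absurd h hi.2
        · linarith
        · linarith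
      have : (N.card : ℝ) ≤ 2 := by
        calc (N.card : ℝ) = ∑ _i ∈ N, (1:ℝ) := by
              rw [Finset.sum_const, nsmul_eq_mul, mul_one]
          _ ≤ ∑ i ∈ N, (m i - u i) := Finset.sum_le_sum h1
          _ = 2 := hNdsum
      have : N.card ≤ 2 := by exact_mod_cast this
      omega
    rcases (by omega : N.card = 0 ∨ N.card = 1 ∨ N.card = 2) with h0 | h1 | h1
    · -- impossible: N empty but sum of m over N is 1
      exfalso
      rw [Finset.card_eq_zero.mp h0, Finset.sum_empty] at hNm
      norm_num at hNm
    · -- quasi string case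
      obtain ⟨i, hNi⟩ := Finset.card_eq_one.mp h1
      have hmi : m i = 1 := by rw [hNi, Finset.sum_singleton] at hNm; exact hNm
      have hui : u i = -1 := by rw [hNi, Finset.sum_singleton] at hNu; exact hNu
      have hfi : ∀ x, f x = φ i (x i) := by
        intro x
        rw [hf x]
        refine Finset.sum_eq_single i (fun j _ hj => ?_) (fun h => absurd (Finset.mem_univ i) h)
        exact hoffN j (by rw [hNi]; simp [hj]) (x j)
      have hφval : ∀ a, φ i a = -1 ∨ φ i a = 0 ∨ φ i a = 1 := by
        intro a
        have h := hval' (Function.update amax i a)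
        rwa [hfi, Function.update_self] at h
      right; left
      set FA : Finset 𝒜 := Finset.univ.filter (fun a => φ i a = 1) with hFA
      set FB : Finset 𝒜 := Finset.univ.filter (fun a => φ i a = -1) with hFB
      refine ⟨i, ↑FA, ↑FB, ?_, ?_, ?_, ?_⟩
      · rw [Set.disjoint_left]
        intro a ha hb
        simp only [hFA, hFB, Finset.coe_filter, Finset.mem_univ, true_and,
          Set.mem_setOf_eq] at ha hb
        rw [ha] at hb; norm_num at hb
      · refine ⟨amax i, Or.inl ?_⟩
        simp only [hFA, Finset.coe_filter, Finset.mem_univ, true_and, Set.mem_setOf_eq]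
        exact hmi
      · rw [Set.ncard_coe_finset, Set.ncard_coe_finset]
        have hrep : ∀ a, φ i a
            = (if φ i a = 1 then (1:ℝ) else 0) - (if φ i a = -1 then 1 else 0) := by
          intro a
          rcases hφval a with h | h | h <;> rw [h] <;> norm_num
        have hc : (0:ℝ) = (FA.card : ℝ) - FB.card := by
          calc (0:ℝ) = ∑ a : 𝒜, φ i a := (hsum i).symm
            _ = ∑ a : 𝒜, ((if φ i a = 1 then (1:ℝ) else 0)
                - (if φ i a = -1 then 1 else 0)) :=
                  Finset.sum_congr rfl fun a _ => hrep a
            _ = (∑ a : 𝒜, if φ i a = 1 then (1:ℝ) else 0)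
                - ∑ a : 𝒜, if φ i a = -1 then (1:ℝ) else 0 := Finset.sum_sub_distrib _ _
            _ = (FA.card : ℝ) - FB.card := by rw [Finset.sum_boole, Finset.sum_boole]
        have : (FA.card : ℝ) = FB.card := by linarith
        exact_mod_cast this
      · funext x
        rw [hfi x]
        show φ i (x i) = quasiString _ _ i x
        unfold quasiString
        have hmA : (x i ∈ (↑FA : Set 𝒜)) ↔ φ i (x i) = 1 := by
          simp [hFA]
        have hmB : (x i ∈ (↑FB : Set 𝒜)) ↔ φ i (x i) = -1 := by
          simp [hFB]
        by_cases h1 : x i ∈ (↑FA : Set 𝒜)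
        · rw [if_pos h1]; exact hmA.mp h1
        · rw [if_neg h1]
          by_cases h2 : x i ∈ (↑FB : Set 𝒜)
          · rw [if_pos h2]; exact hmB.mp h2
          · rw [if_neg h2]
            rcases hφval (x i) with h | h | h
            · exact absurd (hmB.mpr h) h2
            · exact h
            · exact absurd (hmA.mpr h) h1
    · -- quasi cross case
      obtain ⟨i, j, hij, hNij⟩ := Finset.card_eq_two.mp h1
      have hiN : i ∈ N := by rw [hNij]; simp
      have hjN : j ∈ N := by rw [hNij]; simp
      have hdiN : m i - u i ≠ 0 := (Finset.mem_filter.mp hiN).2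
      have hdjN : m j - u j ≠ 0 := (Finset.mem_filter.mp hjN).2
      have hdij : (m i - u i) + (m j - u j) = 2 := by
        rw [hNij, Finset.sum_pair hij] at hNdsum; exact hNdsum
      have hd_i : m i - u i = 1 := by
        rcases hdelta i with h | h | h
        · exact absurd h hdiN
        · exact h
        · exfalso
          rcases hdelta j with h' | h' | h'
          · exact hdjN h'
          · linarith
          · linarith
      have hd_j : m j - u j = 1 := by linarith
      have hmij : m i + m j = 1 := by
        rw [hNij, Finset.sum_pair hij] at hNm; exact hNm
      have huij : u i + u j = -1 := by
        rw [hNij, Finset.sum_pair hij] at hNu; exact hNu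
      have huimj : u i + m j = 0 := by linarith
      have humji : m i + u j = 0 := by linarith
      have hftwo : ∀ x, f x = φ i (x i) + φ j (x j) := by
        intro x
        rw [hf x,
          ← Finset.sum_subset (Finset.subset_univ N) (fun k _ hk => hoffN k hk (x k)),
          hNij, Finset.sum_pair hij]
      have hφi_val : ∀ a, φ i a = u i ∨ φ i a = m i := by
        intro a
        have hb := hval' (Function.update amax i a)
        rw [hftwo, Function.update_self, Function.update_of_ne (Ne.symm hij)] at hb
        have hub : φ i a ≤ m i := hamax i a
        have hlb : u i ≤ φ i a := hamin i a
        rcases hb with h | h | h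
        · exfalso
          have h' : φ i a + m j = -1 := h
          linarith
        · left
          have h' : φ i a + m j = 0 := h
          linarith
        · right
          have h' : φ i a + m j = 1 := h
          linarith
      have hφj_val : ∀ b, φ j b = u j ∨ φ j b = m j := by
        intro b
        have hb := hval' (Function.update amin j b)
        rw [hftwo, Function.update_self, Function.update_of_ne hij] at hb
        have hub : φ j b ≤ m j := hamax j b
        have hlb : u j ≤ φ j b := hamin j b
        rcases hb with h | h | h
        · left
          have h' : u i + φ j b = -1 := h
          linarith
        · right
          have h' : u i + φ j b = 0 := h
          linarith
        · exfalso
          have h' : u i + φ j b = 1 := h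
          linarith
      set FA : Finset 𝒜 := Finset.univ.filter (fun a => φ i a = m i) with hFA
      set FB : Finset 𝒜 := Finset.univ.filter (fun b => φ j b = u j) with hFB
      have hmA : ∀ a, (a ∈ (↑FA : Set 𝒜)) ↔ φ i a = m i := by simp [hFA]
      have hmB : ∀ b, (b ∈ (↑FB : Set 𝒜)) ↔ φ j b = u j := by simp [hFB]
      right; right
      refine ⟨i, j, hij, ↑FA, ↑FB, ⟨amax i, (hmA _).mpr rfl⟩, ⟨amin j, (hmB _).mpr rfl⟩,
        ?_, ?_⟩
      · rw [Set.ncard_coe_finset, Set.ncard_coe_finset]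
        have hrepA : ∀ a, φ i a = u i + (if φ i a = m i then (1:ℝ) else 0) := by
          intro a
          rcases hφi_val a with h | h
          · rw [if_neg]
            · rw [h]; ring
            · rw [h]; intro h2; rw [h2] at hd_i; linarith
          · rw [if_pos h, h]; linarith
        have hrepB : ∀ b, φ j b = m j - (if φ j b = u j then (1:ℝ) else 0) := by
          intro b
          rcases hφj_val b with h | h
          · rw [if_pos h, h]; linarith
          · rw [if_neg]
            · rw [h]; ring
            · rw [h]; intro h2; rw [h2] at hd_j; linarith
        have hcA : (0:ℝ) = (Fintype.card 𝒜 : ℝ) * u i + FA.card := by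
          calc (0:ℝ) = ∑ a : 𝒜, φ i a := (hsum i).symm
            _ = ∑ a : 𝒜, (u i + (if φ i a = m i then (1:ℝ) else 0)) :=
                Finset.sum_congr rfl fun a _ => hrepA a
            _ = (Fintype.card 𝒜 : ℝ) * u i + FA.card := by
                rw [Finset.sum_add_distrib, Finset.sum_const, Finset.card_univ,
                  nsmul_eq_mul, Finset.sum_boole]
        have hcB : (0:ℝ) = (Fintype.card 𝒜 : ℝ) * m j - FB.card := by
          calc (0:ℝ) = ∑ b : 𝒜, φ j b := (hsum j).symm
            _ = ∑ b : 𝒜, (m j - (if φ j b = u j then (1:ℝ) else 0)) :=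
                Finset.sum_congr rfl fun b _ => hrepB b
            _ = (Fintype.card 𝒜 : ℝ) * m j - FB.card := by
                rw [Finset.sum_sub_distrib, Finset.sum_const, Finset.card_univ,
                  nsmul_eq_mul, Finset.sum_boole]
        have : (FA.card : ℝ) = FB.card := by nlinarith [hcA, hcB, huimj]
        exact_mod_cast this
      · funext x
        rw [hftwo x]
        show φ i (x i) + φ j (x j) = quasiCross _ _ i j x
        unfold quasiCross
        have hxi : φ i (x i) = u i ∨ φ i (x i) = m i := hφi_val (x i)
        have hxj : φ j (x j) = u j ∨ φ j (x j) = m j := hφj_val (x j)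
        by_cases hA : x i ∈ (↑FA : Set 𝒜) <;> by_cases hB : x j ∈ (↑FB : Set 𝒜)
        · rw [if_neg (fun h => h.2 hB), if_neg (fun h => h.1 hA)]
          have h1 : φ i (x i) = m i := (hmA _).mp hA
          have h2 : φ j (x j) = u j := (hmB _).mp hB
          linarith
        · rw [if_pos ⟨hA, hB⟩]
          have h1 : φ i (x i) = m i := (hmA _).mp hA
          have h2 : φ j (x j) = m j := by
            rcases hxj with h | h
            · exact absurd ((hmB _).mpr h) hB
            · exact h
          linarith
        · rw [if_neg (fun h => hA h.1), if_pos ⟨hA, hB⟩]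
          have h1 : φ i (x i) = u i := by
            rcases hxi with h | h
            · exact h
            · exact absurd ((hmA _).mpr h) hA
          have h2 : φ j (x j) = u j := (hmB _).mp hB
          linarith
        · rw [if_neg (fun h => hA h.1), if_neg (fun h => hB h.2)]
          have h1 : φ i (x i) = u i := by
            rcases hxi with h | h
            · exact h
            · exact absurd ((hmA _).mpr h) hA
          have h2 : φ j (x j) = m j := by
            rcases hxj with h | h
            · exact absurd ((hmB _).mpr h) hB
            · exact h
          linarith


end Stmt12Aux

end Stmt12AuxSection

/-- A function `f : 𝒜ⁿ → {-1, 0, 1}` is a `λ₁(n,q)`-eigenfunction of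
`H(n,q)` iff `f` is all-zero, or an `(A,B,i)`-quasi string with `|A| = |B|`, or an
`(A,B,i,j)`-quasi cross with `|A| = |B|`. -/
theorem stmt12 {𝒜 : Type*} [Fintype 𝒜] [DecidableEq 𝒜] (q n : ℕ)
    (hq : Fintype.card 𝒜 = q) (hq2 : 2 ≤ q)
    (f : (Fin n → 𝒜) → ℝ) (hf : ∀ x, f x ∈ ({-1, 0, 1} : Set ℝ)) :
    IsEigenfun (hammingGraph n 𝒜) (((q : ℝ) - 1) * n - q) f ↔
      ((∀ x, f x = 0) ∨
       (∃ (i : Fin n) (A B : Set 𝒜), Disjoint A B ∧ (A ∪ B).Nonempty ∧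
          A.ncard = B.ncard ∧ f = quasiString A B i) ∨
       (∃ (i j : Fin n), i ≠ j ∧ ∃ A B : Set 𝒜, A.Nonempty ∧ B.Nonempty ∧
          A.ncard = B.ncard ∧ f = quasiCross A B i j)) := by
  classical
  subst hq
  have hne : Nonempty 𝒜 := Fintype.card_pos_iff.mp (by omega)
  rw [Stmt12Aux.eigen_iff (Fintype.card 𝒜) rfl f]
  constructor
  · intro hT
    have hcardu : (Finset.univ : Finset (Fin n)).card = n := by simp
    have heig : ∀ x, ∑ i ∈ Finset.univ, Stmt12Aux.T i f x
        = ((Fintype.card 𝒜 : ℝ) * (Finset.univ : Finset (Fin n)).card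
            - Fintype.card 𝒜) * f x := by
      intro x
      rw [hcardu]
      exact hT x
    obtain ⟨φ, hsum, hfx⟩ := Stmt12Aux.structure_lemma n Finset.univ f hcardu
      (fun i hi => absurd (Finset.mem_univ i) hi) heig
    exact Stmt12Aux.classify hq2 φ hsum f hfx hf
  · rintro (hzero | ⟨i, A, B, hdisj, hne', hcards, hfq⟩ |
      ⟨i, j, hij, A, B, hAne, hBne, hcards, hfq⟩)
    · intro x
      exact Stmt12Aux.decomp_eigen 0 (by simp) f (fun y => by simp [hzero y]) x
    · intro x
      set g : 𝒜 → ℝ := fun a => (if a ∈ A then (1:ℝ) else 0) - (if a ∈ B then 1 else 0)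
        with hg
      refine Stmt12Aux.decomp_eigen (fun k => if k = i then g else 0) ?_ f ?_ x
      · intro k
        by_cases hk : k = i
        · show ∑ a : 𝒜, (if k = i then g else 0) a = 0
          have hpt : ∀ a : 𝒜, (if k = i then g else 0) a
              = (if a ∈ A then (1:ℝ) else 0) - (if a ∈ B then 1 else 0) := fun a => by
            rw [if_pos hk, hg]
          rw [Finset.sum_congr rfl fun a _ => hpt a, Finset.sum_sub_distrib,
            Finset.sum_boole, Finset.sum_boole, Stmt12Aux.ncard_filter,
            Stmt12Aux.ncard_filter, hcards, sub_self]
        · simp [hk]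
      · intro y
        have h1 : ∑ k : Fin n, (if k = i then g else 0) (y k) = g (y i) := by
          rw [Finset.sum_eq_single i]
          · simp
          · intro k _ hk; simp [hk]
          · intro h; exact absurd (Finset.mem_univ i) h
        rw [h1, hfq]
        show quasiString A B i y = g (y i)
        by_cases hA : y i ∈ A
        · have hB : y i ∉ B := Set.disjoint_left.mp hdisj hA
          simp [quasiString, hg, hA, hB]
        · by_cases hB : y i ∈ B
          · simp [quasiString, hg, hA, hB]
          · simp [quasiString, hg, hA, hB]
    · intro x
      have hq0 : (Fintype.card 𝒜 : ℝ) ≠ 0 := by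
        have : (0:ℕ) < Fintype.card 𝒜 := by omega
        positivity
      set c : ℝ := (A.ncard : ℝ) with hc
      set qr : ℝ := (Fintype.card 𝒜 : ℝ) with hqr
      set gi : 𝒜 → ℝ := fun a => (if a ∈ A then (1:ℝ) else 0) - c / qr with hgi
      set gj : 𝒜 → ℝ := fun b => c / qr - (if b ∈ B then 1 else 0) with hgj
      refine Stmt12Aux.decomp_eigen
        (fun k => if k = i then gi else if k = j then gj else 0) ?_ f ?_ x
      · intro k
        by_cases hk : k = i
        · show ∑ a : 𝒜, (if k = i then gi else if k = j then gj else 0) a = 0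
          have hpt : ∀ a : 𝒜, (if k = i then gi else if k = j then gj else 0) a
              = (if a ∈ A then (1:ℝ) else 0) - c / qr := fun a => by
            rw [if_pos hk, hgi]
          rw [Finset.sum_congr rfl fun a _ => hpt a, Finset.sum_sub_distrib,
            Finset.sum_boole, Stmt12Aux.ncard_filter,
            Finset.sum_const, Finset.card_univ, nsmul_eq_mul, ← hqr, ← hc,
            mul_div_cancel₀ c hq0, sub_self]
        · by_cases hk' : k = j
          · show ∑ b : 𝒜, (if k = i then gi else if k = j then gj else 0) b = 0
            have hpt : ∀ b : 𝒜, (if k = i then gi else if k = j then gj else 0) b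
                = c / qr - (if b ∈ B then (1:ℝ) else 0) := fun b => by
              rw [if_neg hk, if_pos hk', hgj]
            rw [Finset.sum_congr rfl fun b _ => hpt b, Finset.sum_sub_distrib,
              Finset.sum_boole, Stmt12Aux.ncard_filter,
              Finset.sum_const, Finset.card_univ, nsmul_eq_mul, ← hqr]
            rw [hc, hcards]
            rw [show qr * ((B.ncard : ℝ) / qr) = (B.ncard : ℝ) from
              mul_div_cancel₀ _ hq0, sub_self]
          · simp [hk, hk']
      · intro y
        have hpt : ∀ k, (fun k => if k = i then gi else if k = j then gj else 0) k (y k)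
            = (if k = i then gi (y k) else 0) + (if k = j then gj (y k) else 0) := by
          intro k
          show (if k = i then gi else if k = j then gj else 0) (y k)
              = (if k = i then gi (y k) else 0) + (if k = j then gj (y k) else 0)
          by_cases hk : k = i
          · rw [if_pos hk, if_pos hk, if_neg (fun h => hij (hk.symm.trans h))]
            ring
          · by_cases hk' : k = j
            · rw [if_neg hk, if_pos hk', if_neg hk, if_pos hk']
              ring
            · simp [hk, hk']
        rw [Finset.sum_congr rfl fun k _ => hpt k, Finset.sum_add_distrib,
          Finset.sum_ite_eq' Finset.univ i (fun k => gi (y k)),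
          Finset.sum_ite_eq' Finset.univ j (fun k => gj (y k))]
        simp only [Finset.mem_univ, if_pos]
        rw [hfq]
        show quasiCross A B i j y = _
        by_cases hA : y i ∈ A <;> by_cases hB : y j ∈ B <;>
          simp [quasiCross, hgi, hgj, hA, hB] <;> ring
end

section
/- Let 𝒜 have size q ≥ 2, let n ≥ 2, let i, j ∈ {1,…,n} be distinct, and let A, B be nonempty subsets of 𝒜. Then the (A,B,i,j)-quasi cross is a λ₁(n,q)-eigenfunction of H(n,q) if and only if |A| = |B|. -/
open Finset

lemma hamming_dist_one {n : ℕ} {𝒜 : Type*} [DecidableEq 𝒜] (x y : Fin n → 𝒜) :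
    hammingDist x y = 1 ↔ ∃ k a, a ≠ x k ∧ y = Function.update x k a := by
  constructor
  · intro h
    rw [hammingDist, Finset.card_eq_one] at h
    obtain ⟨k, hk⟩ := h
    refine ⟨k, y k, ?_, ?_⟩
    · have : k ∈ Finset.univ.filter fun i => x i ≠ y i := by rw [hk]; simp
      simp at this
      exact fun h' => this h'.symm
    · funext l
      by_cases hl : l = k
      · subst hl; simp
      · have : l ∉ Finset.univ.filter fun i => x i ≠ y i := by rw [hk]; simp [hl]
        simp at this
        rw [Function.update_of_ne hl, this]
  · rintro ⟨k, a, ha, rfl⟩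
    rw [hammingDist, Finset.card_eq_one]
    refine ⟨k, ?_⟩
    ext l
    simp only [Finset.mem_filter, Finset.mem_univ, true_and, Finset.mem_singleton]
    constructor
    · intro hl
      by_contra hlk
      rw [Function.update_of_ne hlk] at hl
      exact hl rfl
    · rintro rfl
      simp [Function.update_self]
      exact fun h => ha h.symm

open scoped Classical in
lemma hamming_sum {n : ℕ} {𝒜 : Type*} [Fintype 𝒜] [DecidableEq 𝒜]
    (f : (Fin n → 𝒜) → ℝ) (x : Fin n → 𝒜) :
    ∑ y, ((hammingGraph n 𝒜).neighborSet x).indicator f y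
      = ∑ k : Fin n, ∑ a : 𝒜, (if a = x k then 0 else f (Function.update x k a)) := by
  have hL : ∑ y, ((hammingGraph n 𝒜).neighborSet x).indicator f y
      = ∑ y ∈ Finset.univ.filter (fun y => hammingDist x y = 1), f y := by
    rw [Finset.sum_filter]
    apply Finset.sum_congr rfl
    intro y _
    rw [Set.indicator_apply]
    by_cases h : hammingDist x y = 1 <;>
      simp [h, hammingGraph, SimpleGraph.neighborSet]
  rw [hL]
  have hR : ∑ k : Fin n, ∑ a : 𝒜, (if a = x k then 0 else f (Function.update x k a))
      = ∑ p ∈ (Finset.univ : Finset (Fin n × 𝒜)).filter (fun p => ¬ p.2 = x p.1),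
          f (Function.update x p.1 p.2) := by
    rw [Finset.sum_filter, Fintype.sum_prod_type]
    apply Finset.sum_congr rfl; intro k _
    apply Finset.sum_congr rfl; intro a _
    by_cases h : a = x k <;> simp [h]
  rw [hR]
  rw [show (Finset.univ.filter (fun y => hammingDist x y = 1))
      = ((Finset.univ : Finset (Fin n × 𝒜)).filter (fun p => ¬ p.2 = x p.1)).image
          (fun p => Function.update x p.1 p.2) from ?_, Finset.sum_image ?_]
  · rintro ⟨k, a⟩ hka ⟨l, b⟩ hlb h
    simp only [Finset.mem_coe, Finset.mem_filter, Finset.mem_univ, true_and] at hka hlb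
    dsimp only at h
    by_cases hkl : k = l
    · subst hkl
      have := congrFun h k
      simpa using this
    · exfalso
      have h1 := congrFun h k
      rw [Function.update_self, Function.update_of_ne hkl] at h1
      exact hka h1
  · ext y
    simp only [Finset.mem_filter, Finset.mem_univ, true_and, Finset.mem_image]
    rw [hamming_dist_one]
    constructor
    · rintro ⟨k, a, ha, rfl⟩; exact ⟨(k, a), ha, rfl⟩
    · rintro ⟨⟨k, a⟩, ha, rfl⟩; exact ⟨k, a, ha, rfl⟩

open scoped Classical in
lemma sumA {𝒜 : Type*} [Fintype 𝒜] (A : Set 𝒜) :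
    ∑ a : 𝒜, (if a ∈ A then (1:ℝ) else 0) = A.ncard := by
  rw [Finset.sum_boole]
  congr 1
  rw [Set.ncard_eq_toFinset_card']
  congr 1
  ext a
  simp

open scoped Classical in
lemma sumA' {𝒜 : Type*} [Fintype 𝒜] (A : Set 𝒜) {q : ℕ} (hq : Fintype.card 𝒜 = q) :
    ∑ a : 𝒜, (if a ∈ A then (0:ℝ) else 1) = q - A.ncard := by
  have h := sumA A
  have h2 : ∑ a : 𝒜, ((if a ∈ A then (1:ℝ) else 0) + (if a ∈ A then (0:ℝ) else 1)) = q := by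
    have : ∀ a : 𝒜, (if a ∈ A then (1:ℝ) else 0) + (if a ∈ A then (0:ℝ) else 1) = 1 := by
      intro a; split <;> ring
    simp only [this, Finset.sum_const, Finset.card_univ, hq, nsmul_eq_mul, mul_one]
  rw [Finset.sum_add_distrib, h] at h2
  linarith

lemma split_sum {𝒜 : Type*} [Fintype 𝒜] [DecidableEq 𝒜] (g : 𝒜 → ℝ) (c : 𝒜) :
    ∑ a : 𝒜, (if a = c then 0 else g a) = (∑ a : 𝒜, g a) - g c := by
  have h : ∀ a, (if a = c then (0:ℝ) else g a) = g a - (if a = c then g c else 0) := by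
    intro a; split_ifs with h
    · subst h; ring
    · ring
  simp only [h, Finset.sum_sub_distrib, Finset.sum_ite_eq' Finset.univ c (fun _ => g c)]
  simp

open scoped Classical in
lemma key {n : ℕ} {𝒜 : Type*} [Fintype 𝒜] [DecidableEq 𝒜] (q : ℕ)
    (hq : Fintype.card 𝒜 = q) (hn : 2 ≤ n) (i j : Fin n) (hij : i ≠ j)
    (A B : Set 𝒜) (x : Fin n → 𝒜) :
    ∑ y, ((hammingGraph n 𝒜).neighborSet x).indicator (quasiCross A B i j) y
      = (((q:ℝ) - 1) * n - q) * quasiCross A B i j x + ((A.ncard : ℝ) - B.ncard) := by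
  set f := quasiCross A B i j with hf
  rw [hamming_sum]
  set α : ℝ := (A.ncard : ℝ)
  set β : ℝ := (B.ncard : ℝ)
  set T : Fin n → ℝ := fun k => ∑ a : 𝒜, (if a = x k then 0 else f (Function.update x k a))
    with hT
  have hgi : ∀ a : 𝒜, f (Function.update x i a)
      = if a ∈ A ∧ x j ∉ B then 1 else if a ∉ A ∧ x j ∈ B then -1 else 0 := by
    intro a
    simp only [hf, quasiCross, Function.update_self, Function.update_of_ne (Ne.symm hij)]
  have hgj : ∀ b : 𝒜, f (Function.update x j b)
      = if x i ∈ A ∧ b ∉ B then 1 else if x i ∉ A ∧ b ∈ B then -1 else 0 := by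
    intro b
    simp only [hf, quasiCross, Function.update_self, Function.update_of_ne hij]
  have hTi : T i = (if x j ∈ B then -((q:ℝ) - α) else α) - f x := by
    rw [hT]
    dsimp only
    rw [split_sum, Function.update_eq_self]
    congr 1
    by_cases hxj : x j ∈ B
    · simp only [hgi, hxj, not_true_eq_false, and_false, if_false, and_true, if_pos]
      have : ∀ a : 𝒜, (if a ∉ A then (-1:ℝ) else 0) = -(if a ∈ A then (0:ℝ) else 1) := by
        intro a; split_ifs with h h' <;> simp_all
      calc ∑ a : 𝒜, (if a ∉ A then (-1:ℝ) else 0)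
          = ∑ a : 𝒜, -(if a ∈ A then (0:ℝ) else 1) := by
            exact Finset.sum_congr rfl fun a _ => this a
        _ = -((q:ℝ) - α) := by rw [Finset.sum_neg_distrib, sumA' A hq]
    · simp only [hgi, hxj, not_false_eq_true, and_true, and_false, if_false, if_neg hxj]
      exact sumA A
  have hTj : T j = (if x i ∈ A then (q:ℝ) - β else -β) - f x := by
    rw [hT]
    dsimp only
    rw [split_sum, Function.update_eq_self]
    congr 1
    by_cases hxi : x i ∈ A
    · simp only [hgj, hxi, true_and, not_true_eq_false, false_and, if_false, if_pos]
      have : ∀ b : 𝒜, (if b ∉ B then (1:ℝ) else if False then -1 else 0)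
          = (if b ∈ B then (0:ℝ) else 1) := by
        intro b; split_ifs with h h' <;> simp_all
      calc ∑ b : 𝒜, (if b ∉ B then (1:ℝ) else 0)
          = ∑ b : 𝒜, (if b ∈ B then (0:ℝ) else 1) := by
            refine Finset.sum_congr rfl fun b _ => ?_
            split_ifs with h h' <;> simp_all
        _ = (q:ℝ) - β := sumA' B hq
    · simp only [hgj, hxi, false_and, if_false, not_false_eq_true, true_and, if_neg hxi]
      calc ∑ b : 𝒜, (if b ∈ B then (-1:ℝ) else 0)
          = ∑ b : 𝒜, -(if b ∈ B then (1:ℝ) else 0) := by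
            refine Finset.sum_congr rfl fun b _ => ?_
            split_ifs <;> ring
        _ = -β := by rw [Finset.sum_neg_distrib, sumA B]
  have hTk : ∀ k : Fin n, k ≠ i → k ≠ j → T k = ((q:ℝ) - 1) * f x := by
    intro k hki hkj
    rw [hT]
    dsimp only
    have : ∀ a : 𝒜, f (Function.update x k a) = f x := by
      intro a
      simp only [hf, quasiCross, Function.update_of_ne (Ne.symm hki),
        Function.update_of_ne (Ne.symm hkj)]
    simp only [this]
    rw [split_sum]
    rw [Finset.sum_const, Finset.card_univ, hq, nsmul_eq_mul]
    ring
  have hsplit : ∑ k ∈ Finset.univ \ ({i, j} : Finset (Fin n)), T k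
      + ∑ k ∈ ({i, j} : Finset (Fin n)), T k = ∑ k, T k :=
    Finset.sum_sdiff (Finset.subset_univ _)
  have hcard : (Finset.univ \ ({i, j} : Finset (Fin n))).card = n - 2 := by
    rw [Finset.card_sdiff_of_subset (Finset.subset_univ _), Finset.card_univ, Fintype.card_fin,
      Finset.card_pair hij]
  have hrest : ∑ k ∈ Finset.univ \ ({i, j} : Finset (Fin n)), T k
      = ((n:ℝ) - 2) * (((q:ℝ) - 1) * f x) := by
    have h1 : ∀ k ∈ Finset.univ \ ({i, j} : Finset (Fin n)), T k = ((q:ℝ) - 1) * f x := by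
      intro k hk
      simp only [Finset.mem_sdiff, Finset.mem_insert, Finset.mem_singleton] at hk
      exact hTk k (fun h => hk.2 (Or.inl h)) (fun h => hk.2 (Or.inr h))
    rw [Finset.sum_congr rfl h1, Finset.sum_const, hcard, nsmul_eq_mul, Nat.cast_sub hn]
    push_cast
    ring
  rw [← hsplit, hrest, Finset.sum_pair hij, hTi, hTj]
  have hfx : f x = if x i ∈ A ∧ x j ∉ B then 1 else if x i ∉ A ∧ x j ∈ B then -1 else 0 := rfl
  by_cases hxi : x i ∈ A <;> by_cases hxj : x j ∈ B <;>
    simp only [hfx, hxi, hxj, not_true_eq_false, not_false_eq_true, true_and, false_and,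
      and_true, and_false, if_true, if_false, if_pos, if_neg] <;> ring


/-- For `n ≥ 2`, distinct `i, j ∈ {1,…,n}` and nonempty `A, B ⊆ 𝒜`,
the `(A,B,i,j)`-quasi cross is a `λ₁(n,q)`-eigenfunction of `H(n,q)` iff `|A| = |B|`. -/
theorem stmt14 {𝒜 : Type*} [Fintype 𝒜] [DecidableEq 𝒜] (q n : ℕ)
    (hq : Fintype.card 𝒜 = q) (hq2 : 2 ≤ q) (hn : 2 ≤ n)
    (i j : Fin n) (hij : i ≠ j) (A B : Set 𝒜) (hA : A.Nonempty) (hB : B.Nonempty) :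
    IsEigenfun (hammingGraph n 𝒜) (((q : ℝ) - 1) * n - q) (quasiCross A B i j) ↔
      A.ncard = B.ncard := by
  constructor
  · intro h
    have hne : Nonempty 𝒜 := by
      have : 0 < Fintype.card 𝒜 := by omega
      exact Fintype.card_pos_iff.mp this
    obtain ⟨x⟩ : Nonempty (Fin n → 𝒜) := ⟨fun _ => Classical.arbitrary 𝒜⟩
    have hx := h x
    rw [key q hq hn i j hij A B x] at hx
    have h0 : (A.ncard : ℝ) = (B.ncard : ℝ) := by linarith
    exact_mod_cast h0
  · intro h x
    rw [key q hq hn i j hij A B x, h]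
    ring
end
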